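/- arXiv:1612.06900 — 2 statements merged into one kernel-verified Lean document; each statement's English description precedes it below -/
import Mathlib

section
/- For arbitrary compound random sequences {X_{sn}} and {Y_{sn}} on the same probability spaces, oln{X} + uuline{Y} ≤ oln{X+Y}, where uuline{Y} = sup{y : lim_n sup_s P(Y_{sn} ≤ y) = 0}. (Assume the relevant quantities are finite.) -/
open MeasureTheory Filter Topology

noncomputable section

variable {S Ω : Type*} [MeasurableSpace Ω]

/-- Compound infimum: `sup {x : lim_n sup_s P(X_{sn} ≤ x) = 0}` (conventions: `sup ∅ = ⊥`). -/
def uulineOp (μ : Measure Ω) (X : S → ℕ → Ω → ℝ) : EReal :=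
  sSup (Real.toEReal '' {x : ℝ |
    Tendsto (fun n => ⨆ s, μ {ω | X s n ω ≤ x}) atTop (𝓝 0)})

/-- Compound supremum: `inf {x : lim_n sup_s P(X_{sn} ≥ x) = 0}` (conventions: `inf ∅ = ⊤`). -/
def oolineOp (μ : Measure Ω) (X : S → ℕ → Ω → ℝ) : EReal :=
  sInf (Real.toEReal '' {x : ℝ |
    Tendsto (fun n => ⨆ s, μ {ω | x ≤ X s n ω}) atTop (𝓝 0)})

/-- Mixed compound infimum: `sup {x : lim_n inf_s P(X_{sn} ≤ x) = 0}`. -/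
def ulnOp (μ : Measure Ω) (X : S → ℕ → Ω → ℝ) : EReal :=
  sSup (Real.toEReal '' {x : ℝ |
    Tendsto (fun n => ⨅ s, μ {ω | X s n ω ≤ x}) atTop (𝓝 0)})

/-- Mixed compound supremum: `inf {x : lim_n inf_s P(X_{sn} ≥ x) = 0}`. -/
def olnOp (μ : Measure Ω) (X : S → ℕ → Ω → ℝ) : EReal :=
  sInf (Real.toEReal '' {x : ℝ |
    Tendsto (fun n => ⨅ s, μ {ω | x ≤ X s n ω}) atTop (𝓝 0)})

/-- Per-state infimum: `sup {x : lim_n P(X_{sn} ≤ x) = 0}`. -/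
def ulnStateOp (μ : Measure Ω) (X : S → ℕ → Ω → ℝ) (s : S) : EReal :=
  sSup (Real.toEReal '' {x : ℝ |
    Tendsto (fun n => μ {ω | X s n ω ≤ x}) atTop (𝓝 0)})

/-- Per-state supremum: `inf {x : lim_n P(X_{sn} ≥ x) = 0}`. -/
def olnStateOp (μ : Measure Ω) (X : S → ℕ → Ω → ℝ) (s : S) : EReal :=
  sInf (Real.toEReal '' {x : ℝ |
    Tendsto (fun n => μ {ω | x ≤ X s n ω}) atTop (𝓝 0)})

/-- Per-state sup-entropy rate (strict tail): `inf {R : lim_n P(h_{sn} > R) = 0}`. -/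
def HbarOp (μ : Measure Ω) (h : S → ℕ → Ω → ℝ) (s : S) : EReal :=
  sInf (Real.toEReal '' {R : ℝ |
    Tendsto (fun n => μ {ω | R < h s n ω}) atTop (𝓝 0)})

end

theorem stmt3 {S Ω : Type*} [MeasurableSpace Ω]
    (μ : MeasureTheory.Measure Ω) [MeasureTheory.IsProbabilityMeasure μ]
    (X Y : S → ℕ → Ω → ℝ)
    (hX_bot : olnOp μ X ≠ ⊥) (hX_top : olnOp μ X ≠ ⊤)
    (hY_bot : uulineOp μ Y ≠ ⊥) (hY_top : uulineOp μ Y ≠ ⊤) :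
    olnOp μ X + uulineOp μ Y ≤ olnOp μ (fun s n ω => X s n ω + Y s n ω) := by
  obtain ⟨a, ha⟩ : ∃ a : ℝ, olnOp μ X = (a : EReal) :=
    ⟨(olnOp μ X).toReal, (EReal.coe_toReal hX_top hX_bot).symm⟩
  rw [ha]
  refine le_sInf ?_
  rintro b ⟨z, hz, rfl⟩
  have key : uulineOp μ Y ≤ ((z - a : ℝ) : EReal) := by
    refine sSup_le ?_
    rintro c ⟨y, hy, rfl⟩
    rw [EReal.coe_le_coe_iff]
    -- show y ≤ z - a, i.e. a ≤ z - y, via olnOp μ X ≤ z - y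
    have hmem : Tendsto (fun n => ⨅ s, μ {ω | (z - y) ≤ X s n ω}) atTop (𝓝 0) := by
      have hbd : ∀ n, (⨅ s, μ {ω | (z - y) ≤ X s n ω}) ≤
          (⨅ s, μ {ω | z ≤ X s n ω + Y s n ω}) + ⨆ s, μ {ω | Y s n ω ≤ y} := by
        intro n
        have h1 : ∀ s : S, μ {ω | (z - y) ≤ X s n ω} ≤
            μ {ω | z ≤ X s n ω + Y s n ω} + ⨆ s', μ {ω | Y s' n ω ≤ y} := by
          intro s
          have hsub : {ω | (z - y) ≤ X s n ω} ⊆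
              {ω | z ≤ X s n ω + Y s n ω} ∪ {ω | Y s n ω ≤ y} := by
            intro ω hω
            by_cases hcase : Y s n ω ≤ y
            · exact Or.inr hcase
            · left; push_neg at hcase; simp only [Set.mem_setOf_eq] at hω ⊢; linarith
          calc μ {ω | (z - y) ≤ X s n ω}
              ≤ μ ({ω | z ≤ X s n ω + Y s n ω} ∪ {ω | Y s n ω ≤ y}) := measure_mono hsub
            _ ≤ μ {ω | z ≤ X s n ω + Y s n ω} + μ {ω | Y s n ω ≤ y} := measure_union_le _ _
            _ ≤ μ {ω | z ≤ X s n ω + Y s n ω} + ⨆ s', μ {ω | Y s' n ω ≤ y} := by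
                gcongr; exact le_iSup (fun s' => μ {ω | Y s' n ω ≤ y}) s
        calc (⨅ s, μ {ω | (z - y) ≤ X s n ω})
            ≤ ⨅ s, (μ {ω | z ≤ X s n ω + Y s n ω} + ⨆ s', μ {ω | Y s' n ω ≤ y}) :=
              iInf_mono h1
          _ = (⨅ s, μ {ω | z ≤ X s n ω + Y s n ω}) + ⨆ s', μ {ω | Y s' n ω ≤ y} := by
              rw [ENNReal.iInf_add]
      have hsum : Tendsto (fun n => (⨅ s, μ {ω | z ≤ X s n ω + Y s n ω})
          + ⨆ s, μ {ω | Y s n ω ≤ y}) atTop (𝓝 0) := by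
        have := hz.add hy
        simpa using this
      exact tendsto_of_tendsto_of_tendsto_of_le_of_le tendsto_const_nhds hsum
        (fun n => zero_le) hbd
    have hle : olnOp μ X ≤ ((z - y : ℝ) : EReal) :=
      sInf_le ⟨z - y, hmem, rfl⟩
    rw [ha, EReal.coe_le_coe_iff] at hle
    linarith
  calc (a : EReal) + uulineOp μ Y ≤ (a : EReal) + ((z - a : ℝ) : EReal) := by
        exact add_le_add_right key _
    _ = ((z : ℝ) : EReal) := by
        rw [← EReal.coe_add]; norm_num
end

section
/- If the compound random sequence {Y_{sn}} converges in probability uniformly in s to a constant y₀ (i.e., lim_n sup_s P(|Y_{sn} - y₀| > ε) = 0 for every ε > 0), then for any compound sequence {X_{sn}} on the same probability spaces with oln{X} finite, oln{X+Y} = oln{X} + y₀, where oln{Z} = inf{x : lim_n inf_s P(Z_{sn} ≥ x) = 0}. -/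
open MeasureTheory Filter Topology

section Aux

open MeasureTheory Filter Topology

variable {S Ω : Type*} [MeasurableSpace Ω]

lemma key_mem (μ : Measure Ω) (X Y : S → ℕ → Ω → ℝ) (y₀ ε x : ℝ)
    (hY : Tendsto (fun n => ⨆ s, μ {ω | ε < |Y s n ω - y₀|}) atTop (𝓝 0))
    (hx : Tendsto (fun n => ⨅ s, μ {ω | x ≤ X s n ω}) atTop (𝓝 0)) :
    Tendsto (fun n => ⨅ s, μ {ω | x + y₀ + ε ≤ X s n ω + Y s n ω}) atTop (𝓝 0) := by
  have hle : ∀ n, (⨅ s, μ {ω | x + y₀ + ε ≤ X s n ω + Y s n ω}) ≤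
      (⨅ s, μ {ω | x ≤ X s n ω}) + ⨆ s, μ {ω | ε < |Y s n ω - y₀|} := by
    intro n
    rw [ENNReal.iInf_add]
    refine iInf_mono fun s => ?_
    calc μ {ω | x + y₀ + ε ≤ X s n ω + Y s n ω}
        ≤ μ ({ω | x ≤ X s n ω} ∪ {ω | ε < |Y s n ω - y₀|}) := by
          refine measure_mono fun ω hω => ?_
          by_cases hx' : x ≤ X s n ω
          · exact Or.inl hx'
          · refine Or.inr ?_
            have : ε < Y s n ω - y₀ := by
              simp only [Set.mem_setOf_eq] at hω; push_neg at hx'; linarith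
            exact lt_of_lt_of_le this (le_abs_self _)
      _ ≤ μ {ω | x ≤ X s n ω} + μ {ω | ε < |Y s n ω - y₀|} := measure_union_le _ _
      _ ≤ μ {ω | x ≤ X s n ω} + ⨆ s, μ {ω | ε < |Y s n ω - y₀|} :=
          add_le_add_right (le_iSup (fun s => μ {ω | ε < |Y s n ω - y₀|}) s) _
  have hsum : Tendsto (fun n => (⨅ s, μ {ω | x ≤ X s n ω}) +
      ⨆ s, μ {ω | ε < |Y s n ω - y₀|}) atTop (𝓝 0) := by
    simpa using hx.add hY
  exact tendsto_of_tendsto_of_tendsto_of_le_of_le tendsto_const_nhds hsum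
    (fun n => zero_le) hle

lemma gen_le (μ : Measure Ω) (X Y : S → ℕ → Ω → ℝ) (y₀ : ℝ)
    (hY : ∀ ε > (0 : ℝ), Tendsto (fun n => ⨆ s, μ {ω | ε < |Y s n ω - y₀|}) atTop (𝓝 0)) :
    olnOp μ (fun s n ω => X s n ω + Y s n ω) ≤ olnOp μ X + (y₀ : EReal) := by
  refine le_of_forall_gt_imp_ge_of_dense fun w hw => ?_
  obtain ⟨r, hr1, hr2⟩ := EReal.exists_between_coe_real hw
  have hlt : olnOp μ X < ((r - y₀ : ℝ) : EReal) := by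
    by_contra h
    push_neg at h
    have h2 : ((r - y₀ : ℝ) : EReal) + (y₀ : EReal) ≤ olnOp μ X + (y₀ : EReal) :=
      add_le_add_left h _
    rw [← EReal.coe_add] at h2
    norm_num at h2
    exact absurd hr1 (not_lt.mpr h2)
  rw [olnOp] at hlt
  obtain ⟨z, hz, hzlt⟩ := sInf_lt_iff.mp hlt
  obtain ⟨xv, hxv, rfl⟩ := hz
  have hxr : xv < r - y₀ := by exact_mod_cast hzlt
  have hε : 0 < r - (xv + y₀) := by linarith
  have hmem : Tendsto (fun n => ⨅ s,
      μ {ω | r ≤ X s n ω + Y s n ω}) atTop (𝓝 0) := by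
    have := key_mem μ X Y y₀ (r - (xv + y₀)) xv (hY _ hε) hxv
    convert this using 3
    ring_nf
  have : olnOp μ (fun s n ω => X s n ω + Y s n ω) ≤ (r : EReal) :=
    sInf_le ⟨r, hmem, rfl⟩
  exact this.trans hr2.le

lemma ereal_add_neg_add (T : EReal) (y : ℝ) : T + ((-y : ℝ) : EReal) + (y : EReal) = T := by
  induction T using EReal.rec with
  | bot => simp
  | coe a => rw [← EReal.coe_add, ← EReal.coe_add]; norm_num
  | top => simp

end Aux


theorem stmt9 {S Ω : Type*} [MeasurableSpace Ω]
    (μ : MeasureTheory.Measure Ω) [MeasureTheory.IsProbabilityMeasure μ]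
    (X Y : S → ℕ → Ω → ℝ) (y₀ : ℝ)
    (hY : ∀ ε > (0 : ℝ),
      Filter.Tendsto (fun n => ⨆ s, μ {ω | ε < |Y s n ω - y₀|})
        Filter.atTop (nhds 0))
    (hX_fin : ∃ c : ℝ, olnOp μ X = (c : EReal)) :
    olnOp μ (fun s n ω => X s n ω + Y s n ω) = olnOp μ X + (y₀ : EReal) := by
  classical
  have h1 : olnOp μ (fun s n ω => X s n ω + Y s n ω) ≤ olnOp μ X + (y₀ : EReal) :=
    gen_le μ X Y y₀ hY
  have hY' : ∀ ε > (0 : ℝ),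
      Filter.Tendsto (fun n => ⨆ s, μ {ω | ε < |(-Y s n ω) - (-y₀)|})
        Filter.atTop (nhds 0) := by
    intro ε hε
    have heq : ∀ s n (ω : Ω), |(-Y s n ω) - (-y₀)| = |Y s n ω - y₀| := by
      intro s n ω
      rw [show (-Y s n ω) - (-y₀) = -(Y s n ω - y₀) by ring, abs_neg]
    simp only [heq]
    exact hY ε hε
  have h2 := gen_le μ (fun s n ω => X s n ω + Y s n ω) (fun s n ω => -Y s n ω) (-y₀) hY'
  simp only [add_neg_cancel_right] at h2
  have h3 : olnOp μ X + (y₀ : EReal) ≤ olnOp μ (fun s n ω => X s n ω + Y s n ω) := by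
    calc olnOp μ X + (y₀ : EReal)
        ≤ olnOp μ (fun s n ω => X s n ω + Y s n ω) + ((-y₀ : ℝ) : EReal) + (y₀ : EReal) :=
          add_le_add_left h2 _
      _ = olnOp μ (fun s n ω => X s n ω + Y s n ω) := ereal_add_neg_add _ y₀
  exact le_antisymm h1 h3
end
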